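/- A local ring R is uniquely bleached if and only if the power series ring R[[x]] is uniquely bleached. -/

import Mathlib

open PowerSeries Finset

section Aux

variable {R : Type*} [Ring R]

/-- Noncommutative version: in a local ring, if a sum is a unit then one summand is. -/
lemma loc_isUnit_or [IsLocalRing R] {a b : R} (h : IsUnit (a + b)) :
    IsUnit a ∨ IsUnit b := by
  obtain ⟨u, hu⟩ := h
  have h1 : ↑u⁻¹ * a + ↑u⁻¹ * b = 1 := by rw [← mul_add, ← hu, Units.inv_mul]
  rcases IsLocalRing.isUnit_or_isUnit_of_add_one h1 with h2 | h2
  · left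
    have := u.isUnit.mul h2
    rwa [← mul_assoc, Units.mul_inv, one_mul] at this
  · right
    have := u.isUnit.mul h2
    rwa [← mul_assoc, Units.mul_inv, one_mul] at this

/-- In a local ring, a left-invertible element is a unit. -/
lemma loc_isUnit_of_left_inv [IsLocalRing R] {x c : R} (h : c * x = 1) : IsUnit x := by
  rcases loc_isUnit_or (a := x * c) (b := 1 - x * c) (by simpa using isUnit_one) with hu | hu
  · have hxc : x * c = 1 := by
      have h2 : (x * c) * (x * c) = (x * c) * 1 := by
        rw [mul_one, mul_assoc, ← mul_assoc c, h, one_mul]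
      exact hu.mul_left_cancel h2
    exact ⟨⟨x, c, hxc, h⟩, rfl⟩
  · exfalso
    have hx0 : x = 0 := by
      have h2 : (1 - x * c) * x = (1 - x * c) * 0 := by
        rw [mul_zero, sub_mul, one_mul, mul_assoc, h, mul_one, sub_self]
      exact hu.mul_left_cancel h2
    rw [hx0, mul_zero] at h
    exact zero_ne_one h

/-- In a local ring, membership in the Jacobson radical of `⊥` is being a nonunit. -/
lemma loc_mem_jacobson_bot_iff [IsLocalRing R] {x : R} :
    x ∈ (⊥ : Ideal R).jacobson ↔ ¬IsUnit x := by
  constructor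
  · intro hx hux
    obtain ⟨M, hM⟩ := Ideal.exists_maximal R
    have hxM : x ∈ M := by
      have hle : (⊥ : Ideal R).jacobson ≤ M := sInf_le ⟨bot_le, hM⟩
      exact hle hx
    exact hM.ne_top (M.eq_top_of_isUnit_mem hxM hux)
  · intro hx
    rw [Ideal.mem_jacobson_iff]
    intro y
    have hyx : ¬IsUnit (y * x) := by
      intro h
      obtain ⟨w, hw⟩ := h
      exact hx (loc_isUnit_of_left_inv (c := ↑w⁻¹ * y)
        (by rw [mul_assoc, ← hw, Units.inv_mul]))
    have hyx1 : IsUnit (y * x + 1) := by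
      rcases loc_isUnit_or (a := y * x + 1) (b := -(y * x)) (by simpa using isUnit_one)
        with h | h
      · exact h
      · exact absurd h.neg (by simpa using hyx)
    obtain ⟨w, hw⟩ := hyx1
    refine ⟨↑w⁻¹, ?_⟩
    rw [Ideal.mem_bot, mul_assoc, sub_eq_zero, ← mul_add_one, ← hw, Units.inv_mul]

lemma sum_split_fst {M : Type*} [AddCommMonoid M] (n : ℕ) (φ : ℕ × ℕ → M) :
    ∑ ij ∈ antidiagonal n, φ ij
      = φ (0, n) + ∑ ij ∈ antidiagonal n, (if ij.1 = 0 then 0 else φ ij) := by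
  have h1 : φ (0, n) = ∑ ij ∈ antidiagonal n, (if ij.1 = 0 then φ ij else 0) := by
    rw [Finset.sum_eq_single_of_mem (0, n) (by simp)]
    · simp
    · rintro ⟨i, j⟩ hmem hne
      rw [Finset.HasAntidiagonal.mem_antidiagonal] at hmem
      have : i ≠ 0 := by rintro rfl; exact hne (by simp [← hmem])
      simp [this]
  rw [h1, ← Finset.sum_add_distrib]
  exact Finset.sum_congr rfl fun ij _ => by split_ifs <;> simp

lemma sum_split_snd {M : Type*} [AddCommMonoid M] (n : ℕ) (φ : ℕ × ℕ → M) :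
    ∑ ij ∈ antidiagonal n, φ ij
      = φ (n, 0) + ∑ ij ∈ antidiagonal n, (if ij.2 = 0 then 0 else φ ij) := by
  have h1 : φ (n, 0) = ∑ ij ∈ antidiagonal n, (if ij.2 = 0 then φ ij else 0) := by
    rw [Finset.sum_eq_single_of_mem (n, 0) (by simp)]
    · simp
    · rintro ⟨i, j⟩ hmem hne
      rw [Finset.HasAntidiagonal.mem_antidiagonal] at hmem
      have : j ≠ 0 := by rintro rfl; exact hne (by simp [← hmem])
      simp [this]
  rw [h1, ← Finset.sum_add_distrib]
  exact Finset.sum_congr rfl fun ij _ => by split_ifs <;> simp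

/-- Recursively defined solution sequence for `F * H - H * G = K`. -/
noncomputable def solveSeq (f g k : ℕ → R) (e : R ≃ R) : ℕ → R
  | n => e.symm (k n
      - ∑ ij ∈ (antidiagonal n).attach,
          (if h : ij.1.1 = 0 then 0 else f ij.1.1 * solveSeq f g k e ij.1.2)
      + ∑ ij ∈ (antidiagonal n).attach,
          (if h : ij.1.2 = 0 then 0 else solveSeq f g k e ij.1.1 * g ij.1.2))
  decreasing_by
  · have := Finset.HasAntidiagonal.mem_antidiagonal.mp ij.2; omega
  · have := Finset.HasAntidiagonal.mem_antidiagonal.mp ij.2; omega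

/-- The key lemma: if the map `x ↦ F₀ x - x G₀` on `R` is bijective, then
`H ↦ F H - H G` is bijective on `R⟦X⟧`. -/
lemma bij_powerSeries (F G : PowerSeries R)
    (hT : Function.Bijective
      (fun x : R => (constantCoeff F) * x - x * (constantCoeff G))) :
    Function.Bijective (fun H : PowerSeries R => F * H - H * G) := by
  set p := constantCoeff F with hp
  set q := constantCoeff G with hq
  constructor
  · -- injectivity
    intro H₁ H₂ h12
    have hH : F * (H₁ - H₂) = (H₁ - H₂) * G := by
      simp only at h12
      rw [mul_sub, sub_mul]
      exact sub_eq_sub_iff_sub_eq_sub.mp h12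
    have hzero : H₁ - H₂ = 0 := by
      set H := H₁ - H₂ with hHdef
      apply PowerSeries.ext
      intro n
      induction n using Nat.strong_induction_on with
      | _ n ih =>
        have hc := congrArg (coeff n) hH
        rw [coeff_mul, coeff_mul] at hc
        rw [Finset.sum_eq_single_of_mem (0, n) (by simp)
          (fun b hb hbne => by
            have hb' := Finset.HasAntidiagonal.mem_antidiagonal.mp hb
            have : b.2 < n := by
              rcases Nat.lt_or_ge b.2 n with h | h
              · exact h
              · exfalso; apply hbne
                have : b.2 = n := le_antisymm (by omega) h
                have : b.1 = 0 := by omega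
                exact Prod.ext this (by omega)
            rw [ih b.2 this, map_zero, mul_zero])] at hc
        rw [Finset.sum_eq_single_of_mem (n, 0) (by simp)
          (fun b hb hbne => by
            have hb' := Finset.HasAntidiagonal.mem_antidiagonal.mp hb
            have : b.1 < n := by
              rcases Nat.lt_or_ge b.1 n with h | h
              · exact h
              · exfalso; apply hbne
                have h1 : b.1 = n := le_antisymm (by omega) h
                exact Prod.ext h1 (by omega)
            rw [ih b.1 this, map_zero, zero_mul])] at hc
        simp only [coeff_zero_eq_constantCoeff_apply] at hc
        have hc2 : p * (coeff n H) - (coeff n H) * q = p * 0 - 0 * q := by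
          rw [← hp, ← hq] at hc
          rw [mul_zero, zero_mul, sub_zero, hc, sub_self]
        have := hT.1 hc2
        rw [map_zero]
        simpa using this
    rw [sub_eq_zero] at hzero
    exact hzero
  · -- surjectivity
    intro K
    set e : R ≃ R := Equiv.ofBijective _ hT with he
    have heapp : ∀ x : R, e x = p * x - x * q := fun x => rfl
    set h : ℕ → R := solveSeq (fun i => coeff i F) (fun i => coeff i G)
      (fun i => coeff i K) e with hh
    refine ⟨PowerSeries.mk h, ?_⟩
    simp only
    apply PowerSeries.ext
    intro n
    have hrec : h n = e.symm (coeff n K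
        - ∑ ij ∈ antidiagonal n, (if ij.1 = 0 then 0 else coeff ij.1 F * h ij.2)
        + ∑ ij ∈ antidiagonal n, (if ij.2 = 0 then 0 else h ij.1 * coeff ij.2 G)) := by
      rw [hh, solveSeq]
      congr 1
      congr 1
      · congr 1
        rw [← Finset.sum_attach (antidiagonal n)
          (fun ij => if ij.1 = 0 then 0 else coeff ij.1 F * h ij.2)]
        exact Finset.sum_congr rfl fun ij _ => by
          by_cases hij : ij.1.1 = 0 <;> simp [hij, hh]
      · rw [← Finset.sum_attach (antidiagonal n)
          (fun ij => if ij.2 = 0 then 0 else h ij.1 * coeff ij.2 G)]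
        exact Finset.sum_congr rfl fun ij _ => by
          by_cases hij : ij.1.2 = 0 <;> simp [hij, hh]
    have heq : p * h n - h n * q = coeff n K
        - ∑ ij ∈ antidiagonal n, (if ij.1 = 0 then 0 else coeff ij.1 F * h ij.2)
        + ∑ ij ∈ antidiagonal n, (if ij.2 = 0 then 0 else h ij.1 * coeff ij.2 G) := by
      rw [← heapp, hrec, Equiv.apply_symm_apply]
    rw [map_sub, coeff_mul, coeff_mul]
    rw [sum_split_fst n (fun ij => coeff ij.1 F * coeff ij.2 (mk h)),
        sum_split_snd n (fun ij => coeff ij.1 (mk h) * coeff ij.2 G)]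
    simp only [coeff_mk, coeff_zero_eq_constantCoeff_apply, ← hp, ← hq]
    set A := ∑ ij ∈ antidiagonal n, (if ij.1 = 0 then 0 else coeff ij.1 F * h ij.2) with hA
    set B := ∑ ij ∈ antidiagonal n, (if ij.2 = 0 then 0 else h ij.1 * coeff ij.2 G) with hB
    calc p * h n + A - (h n * q + B) = (p * h n - h n * q) + A - B := by abel
      _ = (coeff n K - A + B) + A - B := by rw [heq]
      _ = coeff n K := by abel

/-- A power series whose constant coefficient is a unit is a unit. -/
lemma isUnit_powerSeries_of_constantCoeff {f : PowerSeries R}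
    (h : IsUnit (constantCoeff f)) : IsUnit f := by
  lift (constantCoeff f) to Rˣ using h with u hu
  have h1 : Function.Bijective (fun H : PowerSeries R => f * H - H * 0) := by
    apply bij_powerSeries
    simp only [map_zero, mul_zero, sub_zero, ← hu]
    constructor
    · intro a b hab
      simpa using congrArg (fun t => (↑u⁻¹ : R) * t) hab
    · intro y
      exact ⟨↑u⁻¹ * y, by simp⟩
  have h2 : Function.Bijective (fun H : PowerSeries R => 0 * H - H * f) := by
    apply bij_powerSeries
    simp only [map_zero, zero_mul, zero_sub, ← hu]
    constructor
    · intro a b hab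
      simpa using congrArg (fun t => -t * (↑u⁻¹ : R)) hab
    · intro y
      exact ⟨-y * ↑u⁻¹, by simp⟩
  obtain ⟨g, hg⟩ := h1.2 1
  obtain ⟨c, hc⟩ := h2.2 1
  simp only [mul_zero, sub_zero] at hg
  simp only [zero_mul, zero_sub] at hc
  have hcf : (-c) * f = 1 := by
    linear_combination (norm := noncomm_ring) hc
  have hgeq : -c = g := by
    calc -c = (-c) * (f * g) := by rw [hg, mul_one]
      _ = ((-c) * f) * g := by rw [mul_assoc]
      _ = g := by rw [hcf, one_mul]
  exact ⟨⟨f, g, hg, by rw [← hgeq, hcf]⟩, rfl⟩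

/-- The power series ring over a local ring is local. -/
lemma isLocalRing_powerSeries [IsLocalRing R] : IsLocalRing (PowerSeries R) := by
  refine { isUnit_or_isUnit_of_add_one := fun {a b} hab => ?_ }
  have h0 : constantCoeff a + constantCoeff b = 1 := by
    rw [← map_add, hab, map_one]
  rcases IsLocalRing.isUnit_or_isUnit_of_add_one h0 with h | h
  · exact Or.inl (isUnit_powerSeries_of_constantCoeff h)
  · exact Or.inr (isUnit_powerSeries_of_constantCoeff h)

end Aux


/-- `R` is bleached: for every `a` in the Jacobson radical and unit `b`,
the maps `x ↦ b*x - x*a` and `x ↦ a*x - x*b` are surjective. -/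
def Bleached (R : Type*) [Ring R] : Prop :=
  ∀ a b : R, a ∈ (⊥ : Ideal R).jacobson → IsUnit b →
    Function.Surjective (fun x : R => b * x - x * a) ∧
      Function.Surjective (fun x : R => a * x - x * b)

/-- `R` is uniquely bleached: for every `a` in the Jacobson radical and unit `b`,
the maps `x ↦ b*x - x*a` and `x ↦ a*x - x*b` are bijective. -/
def UniquelyBleached (R : Type*) [Ring R] : Prop :=
  ∀ a b : R, a ∈ (⊥ : Ideal R).jacobson → IsUnit b →
    Function.Bijective (fun x : R => b * x - x * a) ∧
      Function.Bijective (fun x : R => a * x - x * b)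

/-- A local ring `R` is uniquely bleached iff the power series ring `R[[x]]` is uniquely
bleached. -/
theorem uniquelyBleached_iff_powerSeries {R : Type*} [Ring R] [IsLocalRing R] :
    UniquelyBleached R ↔ UniquelyBleached (PowerSeries R) := by
  haveI : IsLocalRing (PowerSeries R) := isLocalRing_powerSeries
  constructor
  · intro hR f g hf hg
    have hf0 : ¬IsUnit (constantCoeff f) := fun h =>
      (loc_mem_jacobson_bot_iff.1 hf) (isUnit_powerSeries_of_constantCoeff h)
    have hg0 : IsUnit (constantCoeff g) := hg.map (constantCoeff)
    obtain ⟨h1, h2⟩ := hR (constantCoeff f) (constantCoeff g)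
      (loc_mem_jacobson_bot_iff.2 hf0) hg0
    exact ⟨bij_powerSeries g f h1, bij_powerSeries f g h2⟩
  · intro hS a b ha hb
    have haC : (C a) ∈ (⊥ : Ideal (PowerSeries R)).jacobson := by
      rw [loc_mem_jacobson_bot_iff]
      intro h
      exact (loc_mem_jacobson_bot_iff.1 ha)
        (by simpa [constantCoeff_C] using h.map (constantCoeff))
    have hbC : IsUnit (C b) := hb.map (C)
    obtain ⟨h1, h2⟩ := hS (C a) (C b) haC hbC
    constructor
    · constructor
      · intro x y hxy
        have hC : (C) (b * x - x * a) = (C) (b * y - y * a) := congrArg _ hxy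
        have hx : (C b) * (C x) - (C x) * (C a)
            = (C b) * (C y) - (C y) * (C a) := by
          simpa only [map_sub, map_mul] using hC
        have hxy2 := h1.1 hx
        have := congrArg (constantCoeff) hxy2
        simpa [constantCoeff_C] using this
      · intro r
        obtain ⟨H, hH⟩ := h1.2 (C r)
        refine ⟨constantCoeff H, ?_⟩
        have := congrArg (constantCoeff) hH
        simpa [map_sub, map_mul, constantCoeff_C] using this
    · constructor
      · intro x y hxy
        have hC : (C) (a * x - x * b) = (C) (a * y - y * b) := congrArg _ hxy
        have hx : (C a) * (C x) - (C x) * (C b)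
            = (C a) * (C y) - (C y) * (C b) := by
          simpa only [map_sub, map_mul] using hC
        have hxy2 := h2.1 hx
        have := congrArg (constantCoeff) hxy2
        simpa [constantCoeff_C] using this
      · intro r
        obtain ⟨H, hH⟩ := h2.2 (C r)
        refine ⟨constantCoeff H, ?_⟩
        have := congrArg (constantCoeff) hH
        simpa [map_sub, map_mul, constantCoeff_C] using this
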